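/- Let m, n ≥ 2 be integers with m + n ≥ 5, and let T = ⟨g, h | gᵐ = hⁿ⟩ be the presented group on two generators g, h with the single relator gᵐh⁻ⁿ. Then the subgroup of T generated by gᵐ and gh is free abelian of rank 2, i.e. isomorphic to ℤ × ℤ. -/
import Mathlib

open Monoid Monoid.CoprodI

section Aux

variable {ι : Type*} [DecidableEq ι] {M : ι → Type*} [∀ i, Group (M i)] [∀ i, DecidableEq (M i)]

/-- The alternating reduced word `(a b)^k`. -/
def altW {i j : ι} (hij : i ≠ j) (a : M i) (b : M j) (ha : a ≠ 1) (hb : b ≠ 1) :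
    ∀ k : ℕ, {w : Word M // w.fstIdx ≠ some j ∧ w.prod = (of a * of b) ^ k ∧
      (k ≠ 0 → w ≠ .empty)}
  | 0 => ⟨.empty, by simp [Word.fstIdx, Word.empty], by simp, fun h => absurd rfl h⟩
  | (k+1) => by
    obtain ⟨w, h1, h2, _⟩ := altW hij a b ha hb k
    refine ⟨Word.cons a (Word.cons b w h1 hb) (by simp [Ne.symm hij]) ha,
      by simp [hij], ?_, ?_⟩
    · rw [Word.prod_cons, Word.prod_cons, h2, pow_succ', mul_assoc]
    · intro _ h
      exact absurd (congrArg (fun w => w.toList.length) h) (by simp [Word.cons, Word.empty])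

theorem altPow_eq_one {i j : ι} (hij : i ≠ j) {a : M i} {b : M j} (ha : a ≠ 1) (hb : b ≠ 1)
    {k : ℕ} (h : (of a * of b) ^ k = 1) : k = 0 := by
  by_contra hk
  obtain ⟨w, h1, h2, h3⟩ := altW hij a b ha hb k
  have hpe : w.prod = (Word.empty : Word M).prod := by rw [h2, h, Word.prod_empty]
  exact h3 hk (Word.equiv.symm.injective hpe)

theorem altZpow_eq_zero {i j : ι} (hij : i ≠ j) {a : M i} {b : M j} (ha : a ≠ 1) (hb : b ≠ 1)
    {k : ℤ} (h : (of a * of b) ^ k = 1) : k = 0 := by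
  rcases Int.natAbs_eq k with he | he
  · rw [he, zpow_natCast] at h
    have := altPow_eq_one hij ha hb h
    omega
  · rw [he, zpow_neg, inv_eq_one, zpow_natCast] at h
    have := altPow_eq_one hij ha hb h
    omega

end Aux

/-- The relator `gᵐh⁻ⁿ` of the one-relator group `T = ⟨g, h | gᵐ = hⁿ⟩`, where
`g = FreeGroup.of true` and `h = FreeGroup.of false`. -/
def torusKnotRel (m n : ℕ) : FreeGroup Bool :=
  FreeGroup.of true ^ m * (FreeGroup.of false ^ n)⁻¹

/-- Let `m, n ≥ 2` with `m + n ≥ 5` and let `T = ⟨g, h | gᵐ = hⁿ⟩`.  Then the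
subgroup of `T` generated by `gᵐ` and `gh` is free abelian of rank `2`, i.e.
isomorphic to `ℤ × ℤ`. -/
theorem subgroup_freeAbelian_of_torusKnotGroup
    (m n : ℕ) (hm : 2 ≤ m) (hn : 2 ≤ n) (hmn : 5 ≤ m + n) :
    Nonempty
      (↥(Subgroup.closure
          ({PresentedGroup.of true ^ m, PresentedGroup.of true * PresentedGroup.of false} :
            Set (PresentedGroup ({torusKnotRel m n} : Set (FreeGroup Bool))))) ≃*
        Multiplicative (ℤ × ℤ)) := by
  haveI : Fact (1 < m) := ⟨hm⟩
  haveI : Fact (1 < n) := ⟨hn⟩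
  set rels : Set (FreeGroup Bool) := {torusKnotRel m n} with hrels
  set T := PresentedGroup rels
  set z : T := PresentedGroup.of true ^ m with hzdef
  set t : T := PresentedGroup.of true * PresentedGroup.of false with htdef
  -- the relation g^m = h^n
  have hrel1 : (PresentedGroup.mk rels (torusKnotRel m n)) = 1 :=
    (QuotientGroup.eq_one_iff _).2
      (Subgroup.subset_normalClosure (Set.mem_singleton _))
  have hz : z = PresentedGroup.of false ^ n := by
    rw [torusKnotRel, map_mul, map_inv, map_pow, map_pow, mul_inv_eq_one] at hrel1
    exact hrel1
  -- z commutes with t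
  have hc : Commute z t := by
    have h1 : Commute z (PresentedGroup.of true) := (Commute.refl _).pow_left m
    have h2 : Commute z (PresentedGroup.of false) := by
      rw [hz]; exact (Commute.refl _).pow_left n
    exact h1.mul_right h2
  -- hom to Multiplicative ℤ
  have hf1 : ∀ r ∈ rels, FreeGroup.lift
      (fun i : Bool => Multiplicative.ofAdd (cond i (n : ℤ) (m : ℤ))) r = 1 := by
    rintro r rfl
    rw [torusKnotRel, map_mul, map_inv, map_pow, map_pow, FreeGroup.lift_apply_of, FreeGroup.lift_apply_of]
    rw [mul_inv_eq_one, ← ofAdd_nsmul, ← ofAdd_nsmul]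
    simp [mul_comm]
  set φ₁ : T →* Multiplicative ℤ := PresentedGroup.toGroup hf1 with hφ₁
  -- hom to the free product ZMod m * ZMod n
  set G : Bool → Type := fun i => Multiplicative (ZMod (cond i m n)) with hG
  set x : G true := Multiplicative.ofAdd (1 : ZMod m) with hx
  set y : G false := Multiplicative.ofAdd (1 : ZMod n) with hy
  have hxm : (of x) ^ m = (1 : CoprodI G) := by
    rw [← map_pow, ← ofAdd_nsmul]
    norm_num [nsmul_eq_mul, ZMod.natCast_self]
  have hyn : (of y) ^ n = (1 : CoprodI G) := by
    rw [← map_pow, ← ofAdd_nsmul]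
    norm_num [nsmul_eq_mul, ZMod.natCast_self]
  have hf2 : ∀ r ∈ rels, FreeGroup.lift
      (fun i : Bool => (of (M := G) (Multiplicative.ofAdd (1 : ZMod (cond i m n))))) r = 1 := by
    rintro r rfl
    rw [torusKnotRel, map_mul, map_inv, map_pow, map_pow, FreeGroup.lift_apply_of, FreeGroup.lift_apply_of]
    rw [mul_inv_eq_one]
    exact hxm.trans hyn.symm
  set φ₂ : T →* CoprodI G := PresentedGroup.toGroup hf2 with hφ₂
  have hφ₂g : φ₂ (PresentedGroup.of true) = of x := PresentedGroup.toGroup.of hf2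
  have hφ₂h : φ₂ (PresentedGroup.of false) = of y := PresentedGroup.toGroup.of hf2
  have hxne : x ≠ 1 := fun h =>
    (one_ne_zero : (1 : ZMod m) ≠ 0) (congrArg Multiplicative.toAdd h)
  have hyne : y ≠ 1 := fun h =>
    (one_ne_zero : (1 : ZMod n) ≠ 0) (congrArg Multiplicative.toAdd h)
  -- the homomorphism ψ : ℤ × ℤ → T
  set ψ : Multiplicative (ℤ × ℤ) →* T := MonoidHom.mk'
    (fun p => z ^ (p.toAdd.1) * t ^ (p.toAdd.2)) (by
      intro p q
      show z ^ (p.toAdd.1 + q.toAdd.1) * t ^ (p.toAdd.2 + q.toAdd.2) = _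
      rw [zpow_add, zpow_add]
      exact (hc.zpow_zpow q.toAdd.1 p.toAdd.2).mul_mul_mul_comm _ _) with hψ
  have hψ_apply : ∀ p : Multiplicative (ℤ × ℤ), ψ p = z ^ (p.toAdd.1) * t ^ (p.toAdd.2) :=
    fun _ => rfl
  have hinj : Function.Injective ψ := by
    refine (injective_iff_map_eq_one ψ).2 ?_
    intro p hp
    rw [hψ_apply] at hp
    have hβ : p.toAdd.2 = 0 := by
      have h2 := congrArg φ₂ hp
      rw [map_one, map_mul, map_zpow, map_zpow, hzdef, htdef, map_pow, map_mul,
        hφ₂g, hφ₂h, hxm, one_zpow, one_mul] at h2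
      exact altZpow_eq_zero (by simp) hxne hyne h2
    rw [hβ, zpow_zero, mul_one] at hp
    have hα : p.toAdd.1 = 0 := by
      have h1 := congrArg φ₁ hp
      rw [map_one, map_zpow, hzdef, map_pow, PresentedGroup.toGroup.of, ← ofAdd_nsmul,
        ← ofAdd_zsmul] at h1
      have := congrArg Multiplicative.toAdd h1
      simp only [toAdd_ofAdd, toAdd_one, smul_eq_mul, nsmul_eq_mul] at this
      have hmn0 : (m : ℤ) * n ≠ 0 := by positivity
      exact (mul_eq_zero.1 this).resolve_right hmn0
    have : p.toAdd = 0 := Prod.ext hα hβ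
    exact Multiplicative.toAdd.injective this
  have hzmem : z ∈ ψ.range := ⟨Multiplicative.ofAdd ((1 : ℤ), (0 : ℤ)), by
    rw [hψ_apply]; simp⟩
  have htmem : t ∈ ψ.range := ⟨Multiplicative.ofAdd ((0 : ℤ), (1 : ℤ)), by
    rw [hψ_apply]; simp⟩
  have hrange : ψ.range = Subgroup.closure {z, t} := by
    apply le_antisymm
    · rintro _ ⟨p, rfl⟩
      rw [hψ_apply]
      exact Subgroup.mul_mem _
        (Subgroup.zpow_mem _ (Subgroup.subset_closure (by simp)) _)
        (Subgroup.zpow_mem _ (Subgroup.subset_closure (by simp)) _)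
    · rw [Subgroup.closure_le]
      rintro w hw
      rcases hw with rfl | rfl
      · exact hzmem
      · exact htmem
  exact ⟨(MulEquiv.subgroupCongr hrange).symm.trans (MonoidHom.ofInjective hinj).symm⟩
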